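/- Let f : ℝ² → ℝ² be defined by f₁(x₁,x₂) = log(x₁ + √(x₁² + e^{−2x₂})) + x₂ and f₂(x₁,x₂) = √(x₁² + e^{−2x₂}). Then f is differentiable on all of ℝ², its Jacobian determinant is identically equal to −1, and its curl ∂f₂/∂x₁ − ∂f₁/∂x₂ is identically zero. -/

import Mathlib

open Real

noncomputable def pd1 (g : ℝ × ℝ → ℝ) (p : ℝ × ℝ) : ℝ := deriv (fun t => g (t, p.2)) p.1

noncomputable def pd2 (g : ℝ × ℝ → ℝ) (p : ℝ × ℝ) : ℝ := deriv (fun t => g (p.1, t)) p.2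

noncomputable def jacDet (f : ℝ × ℝ → ℝ × ℝ) (p : ℝ × ℝ) : ℝ :=
  pd1 (fun q => (f q).1) p * pd2 (fun q => (f q).2) p
    - pd2 (fun q => (f q).1) p * pd1 (fun q => (f q).2) p

noncomputable def curl (f : ℝ × ℝ → ℝ × ℝ) (p : ℝ × ℝ) : ℝ :=
  pd1 (fun q => (f q).2) p - pd2 (fun q => (f q).1) p


lemma Apos (x c : ℝ) (hc : 0 < c) : 0 < x ^ 2 + c := by positivity

lemma spos (x c : ℝ) (hc : 0 < c) : 0 < Real.sqrt (x ^ 2 + c) :=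
  Real.sqrt_pos.2 (Apos x c hc)

lemma xspos (x c : ℝ) (hc : 0 < c) : 0 < x + Real.sqrt (x ^ 2 + c) := by
  have hs := Real.sq_sqrt (Apos x c hc).le
  have h0 := Real.sqrt_nonneg (x ^ 2 + c)
  nlinarith [sq_nonneg (x + Real.sqrt (x ^ 2 + c)), sq_nonneg (x - Real.sqrt (x ^ 2 + c))]

-- derivative of t ↦ √(t²+c)
lemma hder_s1 (c t : ℝ) (hc : 0 < c) :
    HasDerivAt (fun t => Real.sqrt (t ^ 2 + c)) (t / Real.sqrt (t ^ 2 + c)) t := by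
  have hi : HasDerivAt (fun t : ℝ => t ^ 2 + c) (2 * t) t := by
    simpa using (hasDerivAt_pow 2 t).add_const c
  have h := (Real.hasDerivAt_sqrt (Apos t c hc).ne').comp t hi
  refine h.congr_deriv ?_
  field_simp

-- derivative of t ↦ √(x²+e^{-2t})
lemma hder_s2 (x t : ℝ) :
    HasDerivAt (fun t => Real.sqrt (x ^ 2 + Real.exp (-2 * t)))
      (-Real.exp (-2 * t) / Real.sqrt (x ^ 2 + Real.exp (-2 * t))) t := by
  have hi : HasDerivAt (fun t : ℝ => x ^ 2 + Real.exp (-2 * t)) (-2 * Real.exp (-2 * t)) t := by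
    have hlin : HasDerivAt (fun t : ℝ => -2 * t) (-2) t := by
      simpa using (hasDerivAt_id t).const_mul (-2 : ℝ)
    have : HasDerivAt (fun t : ℝ => Real.exp (-2 * t)) (Real.exp (-2 * t) * (-2)) t :=
      (Real.hasDerivAt_exp _).comp t hlin
    simpa [mul_comm] using (this.const_add (x ^ 2))
  have h := (Real.hasDerivAt_sqrt (Apos x _ (Real.exp_pos _)).ne').comp t hi
  refine h.congr_deriv ?_
  field_simp

lemma hder_f1x (c y t : ℝ) (hc : 0 < c) :
    HasDerivAt (fun t => Real.log (t + Real.sqrt (t ^ 2 + c)) + y)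
      (1 / Real.sqrt (t ^ 2 + c)) t := by
  have h1 : HasDerivAt (fun t => t + Real.sqrt (t ^ 2 + c))
      (1 + t / Real.sqrt (t ^ 2 + c)) t := (hasDerivAt_id t).add (hder_s1 c t hc)
  have h := ((Real.hasDerivAt_log (xspos t c hc).ne').comp t h1).add_const y
  refine h.congr_deriv ?_
  have hs0 := (spos t c hc).ne'
  have hxs := (xspos t c hc).ne'
  field_simp
  ring

lemma hder_f1y (x t : ℝ) :
    HasDerivAt (fun t => Real.log (x + Real.sqrt (x ^ 2 + Real.exp (-2 * t))) + t)
      (x / Real.sqrt (x ^ 2 + Real.exp (-2 * t))) t := by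
  have h1 : HasDerivAt (fun t => x + Real.sqrt (x ^ 2 + Real.exp (-2 * t)))
      (-Real.exp (-2 * t) / Real.sqrt (x ^ 2 + Real.exp (-2 * t))) t :=
    (hder_s2 x t).const_add x
  have h := ((Real.hasDerivAt_log (xspos x _ (Real.exp_pos _)).ne').comp t h1).add
    (hasDerivAt_id t)
  refine h.congr_deriv ?_
  have hs0 := (spos x _ (Real.exp_pos (-2 * t))).ne'
  have hxs := (xspos x _ (Real.exp_pos (-2 * t))).ne'
  have hsq := Real.sq_sqrt (Apos x _ (Real.exp_pos (-2 * t))).le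
  set E := Real.exp (-2 * t) with hE
  set s := Real.sqrt (x ^ 2 + E) with hs
  field_simp
  linear_combination hsq

theorem stmt4 :
    let f : ℝ × ℝ → ℝ × ℝ := fun p =>
      (Real.log (p.1 + Real.sqrt (p.1 ^ 2 + Real.exp (-2 * p.2))) + p.2,
        Real.sqrt (p.1 ^ 2 + Real.exp (-2 * p.2)))
    Differentiable ℝ f ∧ (∀ p : ℝ × ℝ, jacDet f p = -1) ∧ ∀ p : ℝ × ℝ, curl f p = 0 := by
  intro f
  have key : ∀ p : ℝ × ℝ,
      pd1 (fun q => (f q).1) p = 1 / Real.sqrt (p.1 ^ 2 + Real.exp (-2 * p.2)) ∧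
      pd2 (fun q => (f q).1) p = p.1 / Real.sqrt (p.1 ^ 2 + Real.exp (-2 * p.2)) ∧
      pd1 (fun q => (f q).2) p = p.1 / Real.sqrt (p.1 ^ 2 + Real.exp (-2 * p.2)) ∧
      pd2 (fun q => (f q).2) p = -Real.exp (-2 * p.2) / Real.sqrt (p.1 ^ 2 + Real.exp (-2 * p.2)) := by
    intro p
    refine ⟨?_, ?_, ?_, ?_⟩
    · exact (hder_f1x (Real.exp (-2 * p.2)) p.2 p.1 (Real.exp_pos _)).deriv
    · exact (hder_f1y p.1 p.2).deriv
    · exact (hder_s1 (Real.exp (-2 * p.2)) p.1 (Real.exp_pos _)).deriv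
    · exact (hder_s2 p.1 p.2).deriv
  refine ⟨?_, ?_, ?_⟩
  · intro p
    have hAd : DifferentiableAt ℝ (fun q : ℝ × ℝ => q.1 ^ 2 + Real.exp (-2 * q.2)) p := by
      fun_prop
    have hsd : DifferentiableAt ℝ
        (fun q : ℝ × ℝ => Real.sqrt (q.1 ^ 2 + Real.exp (-2 * q.2))) p :=
      hAd.sqrt (Apos p.1 _ (Real.exp_pos _)).ne'
    exact (((differentiableAt_fst.add hsd).log
      (xspos p.1 _ (Real.exp_pos _)).ne').add differentiableAt_snd).prodMk hsd
  · intro p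
    obtain ⟨h1, h2, h3, h4⟩ := key p
    have hsq := Real.sq_sqrt (Apos p.1 _ (Real.exp_pos (-2 * p.2))).le
    have hs0 := (spos p.1 _ (Real.exp_pos (-2 * p.2))).ne'
    rw [jacDet, h1, h2, h3, h4]
    field_simp
    rw [neg_mul] at hsq
    nlinarith [hsq, sq_nonneg (Real.sqrt (p.1 ^ 2 + Real.exp (-2 * p.2)))]
  · intro p
    obtain ⟨h1, h2, h3, h4⟩ := key p
    rw [curl, h2, h3]
    ring
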